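/- Let E be a Riesz space and let p, q : ℕ → ℕ satisfy the deferred property. Suppose z_n ↓^{D_{st_o}}_{p,q} 0. Then for every infinite set M ⊆ ℕ with δ_{p,q}(M) = 1 such that the subsequence (z_m)_{m∈M} is decreasing, one has inf_{m∈M} z_m = 0; in particular (z_n) is deferred statistical order decreasing to 0 along the index set M. -/

import Mathlib

open Filter Topology

variable {E : Type*} [AddCommGroup E] [Lattice E]
  [CovariantClass E E (· + ·) (· ≤ ·)] [Module ℝ E] [PosSMulMono ℝ E]

/-- `p` and `q` satisfy the deferred property: `p n < q n` for all `n` and `q n → ∞`. -/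
def DeferredProperty (p q : ℕ → ℕ) : Prop :=
  (∀ n, p n < q n) ∧ Tendsto q atTop atTop

open Classical in
/-- The ratio `|{k ∈ K : p n < k ≤ q n}| / (q n - p n)`. -/
noncomputable def deferredRatio (p q : ℕ → ℕ) (K : Set ℕ) (n : ℕ) : ℝ :=
  (((Finset.Ioc (p n) (q n)).filter (fun k => k ∈ K)).card : ℝ) / ((q n : ℝ) - (p n : ℝ))

/-- The deferred density of `K ⊆ ℕ` is `a`. -/
def DeferredDensity (p q : ℕ → ℕ) (K : Set ℕ) (a : ℝ) : Prop :=
  Tendsto (deferredRatio p q K) atTop (nhds a)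

/-- `z` is deferred statistical order decreasing to `0`: there is an (infinite) set
`K = {k₁ < k₂ < ⋯}` of deferred density one along which `z` is decreasing with infimum `0`. -/
def DStatDecreasing (p q : ℕ → ℕ) (z : ℕ → E) : Prop :=
  ∃ K : Set ℕ, K.Infinite ∧ DeferredDensity p q K 1 ∧
    (∀ i ∈ K, ∀ j ∈ K, i ≤ j → z j ≤ z i) ∧ IsGLB (z '' K) 0

/-- `x` is deferred statistical order convergent to `l`. -/
def DStatOrderConv (p q : ℕ → ℕ) (x : ℕ → E) (l : E) : Prop :=
  ∃ z : ℕ → E, DStatDecreasing p q z ∧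
    ∃ K : Set ℕ, K.Infinite ∧ DeferredDensity p q K 1 ∧ ∀ k ∈ K, |x k - l| ≤ z k

open Classical in
lemma inter_unbounded (p q : ℕ → ℕ) (hpq : DeferredProperty p q) {K M : Set ℕ}
    (hK : DeferredDensity p q K 1) (hM : DeferredDensity p q M 1) :
    ∀ n, ∃ m, n ≤ m ∧ m ∈ K ∧ m ∈ M := by
  intro n
  by_contra h
  push_neg at h
  have hsum : Tendsto (fun j => deferredRatio p q K j + deferredRatio p q M j)
      atTop (nhds 2) := by
    have := hK.add hM
    norm_num at this
    exact this
  have h1 : ∀ᶠ j in atTop, (3:ℝ)/2 < deferredRatio p q K j + deferredRatio p q M j :=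
    hsum.eventually_const_lt (by norm_num)
  have h2 : ∀ᶠ j in atTop, 3 * n + 1 ≤ q j := hpq.2.eventually_ge_atTop _
  obtain ⟨j, hj1, hj2⟩ := (h1.and h2).exists
  set I := Finset.Ioc (p j) (q j) with hI
  set a := (I.filter (fun k => k ∈ K)).card with ha
  set b := (I.filter (fun k => k ∈ M)).card with hb
  set c := (I.filter (fun k => k ∈ K ∧ k ∈ M)).card with hc
  have hdI : I.card = q j - p j := Nat.card_Ioc _ _
  have hpltq := hpq.1 j
  have hab : a + b ≤ I.card + c := by
    have hU : (I.filter (fun k => k ∈ K)) ∪ (I.filter (fun k => k ∈ M)) ⊆ I :=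
      Finset.union_subset (Finset.filter_subset _ _) (Finset.filter_subset _ _)
    have hInt : (I.filter (fun k => k ∈ K)) ∩ (I.filter (fun k => k ∈ M))
        = I.filter (fun k => k ∈ K ∧ k ∈ M) := (Finset.filter_and _ _ _).symm
    calc a + b = ((I.filter (fun k => k ∈ K)) ∪ (I.filter (fun k => k ∈ M))).card
          + ((I.filter (fun k => k ∈ K)) ∩ (I.filter (fun k => k ∈ M))).card :=
          (Finset.card_union_add_card_inter _ _).symm
      _ ≤ I.card + c := by
          rw [hInt]
          exact Nat.add_le_add_right (Finset.card_le_card hU) _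
  have hc2 : 2 * c < q j - p j := by
    have hsub : I.filter (fun k => k ∈ K ∧ k ∈ M) ⊆ Finset.Ioo (p j) n := by
      intro k hk
      simp only [hI, Finset.mem_filter, Finset.mem_Ioc] at hk
      have hkn : k < n := by
        by_contra hkn
        exact h k (le_of_not_gt hkn) hk.2.1 hk.2.2
      exact Finset.mem_Ioo.2 ⟨hk.1.1, hkn⟩
    by_cases hpn : p j + 1 < n
    · have hcle : c ≤ n - p j - 1 := by
        have := Finset.card_le_card hsub
        simpa [Nat.card_Ioo] using this
      omega
    · have : I.filter (fun k => k ∈ K ∧ k ∈ M) = ∅ := by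
        apply Finset.eq_empty_of_forall_notMem
        intro k hk
        have := hsub hk
        simp only [Finset.mem_Ioo] at this
        omega
      rw [hc, this]
      simp
      omega
  -- now derive contradiction in ℝ
  have hd : (0:ℝ) < (q j : ℝ) - (p j : ℝ) := by
    have : (p j : ℝ) < (q j : ℝ) := by exact_mod_cast hpltq
    linarith
  have hratioK : deferredRatio p q K j = (a : ℝ) / ((q j : ℝ) - (p j : ℝ)) := rfl
  have hratioM : deferredRatio p q M j = (b : ℝ) / ((q j : ℝ) - (p j : ℝ)) := rfl
  have habR : (a : ℝ) + (b : ℝ) ≤ ((q j : ℝ) - (p j : ℝ)) + (c : ℝ) := by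
    have : (a + b : ℕ) ≤ (q j - p j) + c := hdI ▸ hab
    have := (Nat.cast_le (α := ℝ)).2 this
    push_cast [Nat.cast_sub hpltq.le] at this
    linarith
  have hcR : 2 * (c : ℝ) < (q j : ℝ) - (p j : ℝ) := by
    have := (Nat.cast_lt (α := ℝ)).2 hc2
    push_cast [Nat.cast_sub hpltq.le] at this
    linarith
  have hsumle : deferredRatio p q K j + deferredRatio p q M j < 3/2 := by
    rw [hratioK, hratioM, ← add_div]
    rw [div_lt_iff₀ hd]
    linarith
  linarith

theorem stmt0 (p q : ℕ → ℕ) (hpq : DeferredProperty p q) (z : ℕ → E)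
    (hz : DStatDecreasing p q z) (M : Set ℕ) (hM : M.Infinite)
    (hMd : DeferredDensity p q M 1)
    (hMdec : ∀ i ∈ M, ∀ j ∈ M, i ≤ j → z j ≤ z i) :
    IsGLB (z '' M) 0 := by
  obtain ⟨K, hKinf, hKd, hKdec, hKglb⟩ := hz
  have hub : ∀ n, ∃ m, n ≤ m ∧ m ∈ K ∧ m ∈ M := inter_unbounded p q hpq hKd hMd
  constructor
  · rintro _ ⟨m, hm, rfl⟩
    obtain ⟨k, hk, hkK, hkM⟩ := hub m
    have h0 : (0 : E) ≤ z k := hKglb.1 ⟨k, hkK, rfl⟩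
    exact h0.trans (hMdec m hm k hkM hk)
  · intro b hb
    apply hKglb.2
    rintro _ ⟨k, hk, rfl⟩
    obtain ⟨m, hm, hmK, hmM⟩ := hub k
    exact (hb ⟨m, hmM, rfl⟩).trans (hKdec k hk m hmK hm)
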